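/- Let μ > 0, λ > 1/μ, τ ≥ λμ, ρ ≥ 0, C ≥ 0, α ≥ 0, β ≥ 0, and H ≥ 1 be real constants, and define η_k = λ/(k + τ). Suppose the sequence (e_k)_{k≥0} of nonnegative reals satisfies the per-round recursion e_{k+1} ≤ (1 − μ·η_k)·e_k + 2·η_k·ρ·(α·H + β) + η_k²·C for all k ≥ 0. Then for every K ≥ 0, e_K ≤ max{λ²·C/(λμ − 1), τ·e_0}/(K + τ) + (2ρ/μ)·(α·H + β). In particular, e_K = O(1/K) + O(α) + O(β). -/

import Mathlib

/-- Theorem 1 (quantitative form): under the per-round recursion of Eq. (10), the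
expected squared distance to the optimum satisfies
`e_K ≤ max (λ²C/(λμ-1)) (τ·e₀)/(K+τ) + (2ρ/μ)(αH + β)`,
i.e. `e_K = O(1/K) + O(α) + O(β)`. -/
theorem fedcg_convergence_rate
    (μ lam τ ρ C α β H : ℝ)
    (hμ : 0 < μ) (hlam : 1 / μ < lam) (hτ : lam * μ ≤ τ)
    (hρ : 0 ≤ ρ) (hC : 0 ≤ C) (hα : 0 ≤ α) (hβ : 0 ≤ β) (hH : 1 ≤ H)
    (η : ℕ → ℝ) (hη : ∀ k : ℕ, η k = lam / ((k : ℝ) + τ))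
    (e : ℕ → ℝ) (he : ∀ k, 0 ≤ e k)
    (hrec : ∀ k : ℕ,
      e (k + 1) ≤ (1 - μ * η k) * e k + 2 * η k * ρ * (α * H + β) + (η k) ^ 2 * C) :
    ∀ K : ℕ,
      e K ≤ max (lam ^ 2 * C / (lam * μ - 1)) (τ * e 0) / ((K : ℝ) + τ) +
        (2 * ρ / μ) * (α * H + β) := by
  have hlamμ : 1 < lam * μ := by
    rw [div_lt_iff₀ hμ] at hlam; linarith
  have hτ1 : (1:ℝ) < τ := lt_of_lt_of_le hlamμ hτ
  have hτ0 : (0:ℝ) < τ := by linarith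
  have hlam0 : 0 < lam := by
    have h1 : 0 < 1 / μ := by positivity
    linarith
  set ν := max (lam ^ 2 * C / (lam * μ - 1)) (τ * e 0) with hνdef
  set D := (2 * ρ / μ) * (α * H + β) with hDdef
  have hAB : 0 ≤ α * H + β := by nlinarith
  have hD0 : 0 ≤ D := by
    have : 0 ≤ 2 * ρ / μ := by positivity
    exact mul_nonneg this hAB
  have hν0 : 0 ≤ ν := le_trans (mul_nonneg hτ0.le (he 0)) (le_max_right _ _)
  have hC' : lam ^ 2 * C ≤ ν * (lam * μ - 1) := by
    have h := le_max_left (lam ^ 2 * C / (lam * μ - 1)) (τ * e 0)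
    rw [div_le_iff₀ (by linarith : (0:ℝ) < lam * μ - 1)] at h
    exact h
  have hμD : μ * D = 2 * ρ * (α * H + β) := by
    rw [hDdef]; field_simp
  intro K
  induction K with
  | zero =>
    simp only [Nat.cast_zero, zero_add]
    have h1 : e 0 ≤ ν / τ := by
      rw [le_div_iff₀ hτ0]
      have : τ * e 0 ≤ ν := le_max_right _ _
      linarith [this]
    linarith
  | succ k ih =>
    have hk0 : (0:ℝ) ≤ (k:ℝ) := Nat.cast_nonneg k
    set t : ℝ := (k:ℝ) + τ with htdef
    have ht0 : (0:ℝ) < t := by positivity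
    have ht1 : (1:ℝ) < t := by simp only [htdef]; linarith
    have hηk : η k = lam / t := hη k
    have htlamμ : lam * μ ≤ t := by simp only [htdef]; linarith
    have hμη : μ * η k ≤ 1 := by
      rw [hηk, mul_div_assoc']
      rw [div_le_one ht0]
      nlinarith
    have hμη0 : 0 ≤ 1 - μ * η k := by linarith
    -- step 1: use recursion and induction hypothesis
    have step1 : e (k + 1) ≤ (1 - μ * η k) * (ν / t + D) + 2 * η k * ρ * (α * H + β)
        + (η k) ^ 2 * C := by
      have hr := hrec k
      have h1 : (1 - μ * η k) * e k ≤ (1 - μ * η k) * (ν / t + D) :=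
        mul_le_mul_of_nonneg_left ih hμη0
      linarith
    -- key algebraic inequality
    have hfin : (1 - μ * (lam / t)) * (ν / t) + (lam / t) ^ 2 * C ≤ ν / (t + 1) := by
      have heq : (1 - μ * (lam / t)) * (ν / t) + (lam / t) ^ 2 * C
          = ((t - μ * lam) * ν + lam ^ 2 * C) / t ^ 2 := by
        field_simp
      rw [heq, div_le_div_iff₀ (by positivity) (by linarith : (0:ℝ) < t + 1)]
      have h1 : (t - μ * lam) * ν + lam ^ 2 * C ≤ (t - μ * lam) * ν + ν * (lam * μ - 1) :=
        add_le_add_right hC' _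
      have h3 := mul_le_mul_of_nonneg_right h1 (by linarith : (0:ℝ) ≤ t + 1)
      have h4 : ((t - μ * lam) * ν + ν * (lam * μ - 1)) * (t + 1) = ν * t ^ 2 - ν := by
        ring
      linarith
    -- combine
    have hcomb : (1 - μ * η k) * (ν / t + D) + 2 * η k * ρ * (α * H + β) + (η k) ^ 2 * C
        = (1 - μ * (lam / t)) * (ν / t) + (lam / t) ^ 2 * C + D := by
      rw [hηk]
      have : 2 * (lam / t) * ρ * (α * H + β) = μ * (lam / t) * D := by
        rw [show μ * (lam / t) * D = lam / t * (μ * D) by ring, hμD]; ring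
      rw [this]; ring
    rw [hcomb] at step1
    have hcast : ((k + 1 : ℕ) : ℝ) + τ = t + 1 := by
      push_cast; simp only [htdef]; ring
    rw [hcast]
    linarith
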